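/- Let C be a finite candidate set and let S be a tournament solution on C that is exclusive monotonic and satisfies exclusive negative monotonicity (ENM). Then S-Approval is monotonic: whenever c is an S-Approval winner of an election E on C and the election E' is obtained from E by improving c, c is an S-Approval winner of E'. -/

import Mathlib

open scoped Classical

/-- A tournament on `C`: an irreflexive relation such that for all distinct
`a b` exactly one of `r a b`, `r b a` holds. -/
def IsTournament {C : Type*} (r : C → C → Prop) : Prop :=
  (∀ a : C, ¬ r a a) ∧ ∀ a b : C, a ≠ b → (r a b ↔ ¬ r b a)

/-- The `S`-Approval score of candidate `c` in election `E`: the number of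
votes `T` of `E` with `c ∈ S T`. -/
noncomputable def approvalScore {C : Type*} (S : (C → C → Prop) → Set C)
    (E : List (C → C → Prop)) (c : C) : ℕ :=
  (E.map (fun r => if c ∈ S r then 1 else 0)).sum

/-- The `S`-Approval winner set of election `E`: candidates of maximum score. -/
def winners {C : Type*} (S : (C → C → Prop) → Set C)
    (E : List (C → C → Prop)) : Set C :=
  {c | ∀ d : C, approvalScore S E d ≤ approvalScore S E c}

/-- `r'` is obtained from `r` by improving candidate `c`: the two relations
agree on all pairs of candidates distinct from `c`, and the outneighborhood
of `c` only grows. -/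
def ImprovedBy {C : Type*} (r r' : C → C → Prop) (c : C) : Prop :=
  (∀ a b : C, a ≠ c → b ≠ c → (r a b ↔ r' a b)) ∧ ∀ b : C, r c b → r' c b

/-- Exclusive monotonicity of a tournament solution. -/
def ExclusiveMonotonic {C : Type*} (S : (C → C → Prop) → Set C) : Prop :=
  ∀ (r r' : C → C → Prop) (c : C), IsTournament r → IsTournament r' →
    ImprovedBy r r' c → c ∈ S r → c ∈ S r' ∧ S r' ⊆ S r

/-- Exclusive negative monotonicity (ENM) of a tournament solution. -/
def ENM {C : Type*} (S : (C → C → Prop) → Set C) : Prop :=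
  ∀ (r r' : C → C → Prop) (c : C), IsTournament r → IsTournament r' →
    ImprovedBy r r' c → c ∉ S r → ¬ S r' ⊆ S r → c ∈ S r'

/-- if `S` is exclusive monotonic and satisfies ENM, then
`S`-Approval is monotonic. -/
theorem stmt_3 {C : Type*} [Finite C] (S : (C → C → Prop) → Set C)
    (hS : ∀ r : C → C → Prop, IsTournament r → (S r).Nonempty)
    (hEM : ExclusiveMonotonic S) (hENM : ENM S)
    (E E' : List (C → C → Prop)) (c : C)
    (hE : ∀ r ∈ E, IsTournament r) (hE' : ∀ r ∈ E', IsTournament r)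
    (himp : List.Forall₂ (fun r r' => ImprovedBy r r' c) E E')
    (hwin : c ∈ winners S E) :
    c ∈ winners S E' := by
  intro d
  have key : approvalScore S E c + approvalScore S E' d ≤
      approvalScore S E d + approvalScore S E' c := by
    clear hwin
    induction himp with
    | nil => simp [approvalScore]
    | @cons r r' L L' h hl ih =>
      have hr : IsTournament r := hE r List.mem_cons_self
      have hr' : IsTournament r' := hE' r' List.mem_cons_self
      have ihL := ih (fun x hx => hE x (List.mem_cons_of_mem _ hx))
        (fun x hx => hE' x (List.mem_cons_of_mem _ hx))
      have hvote : (if c ∈ S r then 1 else 0) + (if d ∈ S r' then 1 else 0) ≤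
          (if d ∈ S r then 1 else 0) + ((if c ∈ S r' then 1 else 0) : ℕ) := by
        by_cases hc : c ∈ S r
        · obtain ⟨hc', hsub⟩ := hEM r r' c hr hr' h hc
          by_cases hd' : d ∈ S r'
          · simp [hc, hc', hd', hsub hd']
          · simp [hc, hc', hd']
        · by_cases hsub : S r' ⊆ S r
          · by_cases hd' : d ∈ S r'
            · simp only [hc, hd', hsub hd', if_true, if_false]
              split <;> omega
            · simp [hc, hd']
          · have hc' := hENM r r' c hr hr' h hc hsub
            simp only [hc, hc', if_true, if_false]
            split <;> split <;> omega
      simp only [approvalScore, List.map_cons, List.sum_cons] at *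
      omega
  have := hwin d
  omega
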